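/- arXiv:1110.0671 — 2 statements merged into one kernel-verified Lean document; each statement's English description precedes it below -/
import Mathlib

section
/- Let g : ℝ × ℝ → ℝ be defined by g(a,b) = max{ (1/4)(3 − 6√3·a·b + 6b²), (3/4)(1 + 2√3·a·b + 2b²), 3a² }. Then (1/3)·(1/(2π))·∫₀^{2π} g(cos θ, sin θ) dθ = (1/2)·(1 + 3√3/(2π)). (This is the mean square width of an equilateral triangle with unit side length.) -/
open Real

/-- Squared-width function of the equilateral triangle with vertices
`(0,1)`, `(√3/2, −1/2)`, `(−√3/2, −1/2)` in direction `(a,b)` on the unit circle. -/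
noncomputable def gTriangle (a b : ℝ) : ℝ :=
  max (max ((1/4) * (3 - 6 * Real.sqrt 3 * a * b + 6 * b ^ 2))
        ((3/4) * (1 + 2 * Real.sqrt 3 * a * b + 2 * b ^ 2)))
    (3 * a ^ 2)

noncomputable def Ftri (θ : ℝ) : ℝ := gTriangle (Real.cos θ) (Real.sin θ)

lemma h3 : Real.sqrt 3 ^ 2 = 3 := Real.sq_sqrt (by norm_num)

lemma contF : Continuous Ftri := by
  unfold Ftri gTriangle; fun_prop

lemma intF : ∀ t₁ t₂ : ℝ, IntervalIntegrable Ftri MeasureTheory.volume t₁ t₂ :=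
  fun _ _ => contF.intervalIntegrable _ _

lemma periodicF : Function.Periodic Ftri (π/3) := by
  intro θ
  unfold Ftri gTriangle
  have hc : Real.cos (θ + π/3) = Real.cos θ * (1/2) - Real.sin θ * (Real.sqrt 3 / 2) := by
    rw [Real.cos_add, Real.cos_pi_div_three, Real.sin_pi_div_three]
  have hs : Real.sin (θ + π/3) = Real.sin θ * (1/2) + Real.cos θ * (Real.sqrt 3 / 2) := by
    rw [Real.sin_add, Real.cos_pi_div_three, Real.sin_pi_div_three]
  set c := Real.cos θ with hcdef
  set s := Real.sin θ with hsdef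
  have hp : s ^ 2 + c ^ 2 = 1 := Real.sin_sq_add_cos_sq θ
  rw [hc, hs]
  have e1 : (1/4) * (3 - 6 * Real.sqrt 3 * (c * (1/2) - s * (Real.sqrt 3 / 2)) *
      (s * (1/2) + c * (Real.sqrt 3 / 2)) + 6 * (s * (1/2) + c * (Real.sqrt 3 / 2)) ^ 2)
      = (3/4) * (1 + 2 * Real.sqrt 3 * c * s + 2 * s ^ 2) := by
    linear_combination ((3/8) * s^2 + (3/8) * Real.sqrt 3 * c * s) * h3
  have e2 : (3/4) * (1 + 2 * Real.sqrt 3 * (c * (1/2) - s * (Real.sqrt 3 / 2)) *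
      (s * (1/2) + c * (Real.sqrt 3 / 2)) + 2 * (s * (1/2) + c * (Real.sqrt 3 / 2)) ^ 2)
      = 3 * c ^ 2 := by
    linear_combination ((-3/8) * s^2 + (3/4) * c^2 + (-3/8) * Real.sqrt 3 * c * s) * h3
      - (3/4) * hp
  have e3 : 3 * (c * (1/2) - s * (Real.sqrt 3 / 2)) ^ 2
      = (1/4) * (3 - 6 * Real.sqrt 3 * c * s + 6 * s ^ 2) := by
    linear_combination ((3/4) * s^2) * h3 + (3/4) * hp
  rw [e1, e2, e3]
  rw [max_comm, ← max_assoc]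

/-- On `[π/6, π/2]` the middle branch is the max. -/
lemma F_eq_on (θ : ℝ) (h1 : π/6 ≤ θ) (h2 : θ ≤ π/2) :
    Ftri θ = (3/4) * (1 + 2 * Real.sqrt 3 * Real.cos θ * Real.sin θ + 2 * Real.sin θ ^ 2) := by
  unfold Ftri gTriangle
  set c := Real.cos θ
  set s := Real.sin θ
  have hp : s ^ 2 + c ^ 2 = 1 := Real.sin_sq_add_cos_sq θ
  have hr : (0:ℝ) ≤ Real.sqrt 3 := Real.sqrt_nonneg 3
  have hpi : (0:ℝ) < π := Real.pi_pos
  -- f1 ≤ f2 : difference is 3√3 sin θ cos θ and sin(2θ) ≥ 0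
  have hsin2 : 0 ≤ Real.sin (2*θ) := by
    apply Real.sin_nonneg_of_nonneg_of_le_pi <;> nlinarith
  have hsc : 0 ≤ s * c := by
    have := Real.sin_two_mul θ
    nlinarith
  have hle1 : (1/4) * (3 - 6 * Real.sqrt 3 * c * s + 6 * s ^ 2)
      ≤ (3/4) * (1 + 2 * Real.sqrt 3 * c * s + 2 * s ^ 2) := by nlinarith
  -- f3 ≤ f2 : difference is (3√3/2) sin(2θ − π/3)
  have hsin2' : 0 ≤ Real.sin (2*θ - π/3) := by
    apply Real.sin_nonneg_of_nonneg_of_le_pi <;> nlinarith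
  have key : (3/4) * (1 + 2 * Real.sqrt 3 * c * s + 2 * s ^ 2) - 3 * c ^ 2
      = (3 * Real.sqrt 3 / 2) * Real.sin (2*θ - π/3) := by
    rw [Real.sin_sub, Real.sin_two_mul, Real.cos_two_mul, Real.sin_pi_div_three,
      Real.cos_pi_div_three]
    have : Real.cos θ = c := rfl
    have : Real.sin θ = s := rfl
    linear_combination (-3/4 + (3/2) * c^2) * h3 + (3/2) * hp
  have hle2 : 3 * c ^ 2 ≤ (3/4) * (1 + 2 * Real.sqrt 3 * c * s + 2 * s ^ 2) := by nlinarith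
  rw [max_eq_right hle1, max_eq_left hle2]

/-- The mean square width of an equilateral triangle with unit side length is
`(1/2)(1 + 3√3/(2π))`. -/
theorem mean_square_width_equilateral_triangle :
    (1 / 3) * (1 / (2 * π)) *
      ∫ θ in (0:ℝ)..(2 * π), gTriangle (Real.cos θ) (Real.sin θ)
      = (1 / 2) * (1 + 3 * Real.sqrt 3 / (2 * π)) := by
  have hper := periodicF
  have hint := intF
  have hpi : (0:ℝ) < π := Real.pi_pos
  have step1 : (∫ θ in (0:ℝ)..(2 * π), Ftri θ) = (6:ℤ) • ∫ θ in (0:ℝ)..(0 + π/3), Ftri θ := by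
    have := hper.intervalIntegral_add_zsmul_eq 6 0 hint
    rw [← this]
    norm_num
    ring_nf
  have step2 : (∫ θ in (0:ℝ)..(0 + π/3), Ftri θ) = ∫ θ in (π/6)..(π/6 + π/3), Ftri θ :=
    hper.intervalIntegral_add_eq 0 (π/6)
  have hends : π/6 + π/3 = π/2 := by ring
  -- compute integral over [π/6, π/2]
  have hcong : (∫ θ in (π/6)..(π/2), Ftri θ)
      = ∫ θ in (π/6)..(π/2),
          (3/4) * (1 + 2 * Real.sqrt 3 * Real.cos θ * Real.sin θ + 2 * Real.sin θ ^ 2) := by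
    apply intervalIntegral.integral_congr
    intro θ hθ
    rw [Set.uIcc_of_le (by nlinarith : (π/6:ℝ) ≤ π/2)] at hθ
    exact F_eq_on θ hθ.1 hθ.2
  have hcalc : (∫ θ in (π/6)..(π/2),
      (3/4) * (1 + 2 * Real.sqrt 3 * Real.cos θ * Real.sin θ + 2 * Real.sin θ ^ 2))
      = π/2 + 3 * Real.sqrt 3 / 4 := by
    have hderiv : ∀ θ ∈ Set.uIcc (π/6) (π/2),
        HasDerivAt (fun x => (3/2) * x - (3 * Real.sqrt 3 / 4) * Real.cos x ^ 2
            - (3/4) * (Real.sin x * Real.cos x))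
          ((3/4) * (1 + 2 * Real.sqrt 3 * Real.cos θ * Real.sin θ + 2 * Real.sin θ ^ 2)) θ := by
      intro θ _
      have h1 := (((hasDerivAt_id θ).const_mul ((3:ℝ)/2)).sub
          (((Real.hasDerivAt_cos θ).pow 2).const_mul (3 * Real.sqrt 3 / 4))).sub
          (((Real.hasDerivAt_sin θ).mul (Real.hasDerivAt_cos θ)).const_mul ((3:ℝ)/4))
      refine h1.congr_deriv (Eq.symm ?_)
      push_cast
      have hp : Real.sin θ ^ 2 + Real.cos θ ^ 2 = 1 := Real.sin_sq_add_cos_sq θ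
      linear_combination (3/4) * hp
    have hcont : IntervalIntegrable
        (fun θ => (3/4) * (1 + 2 * Real.sqrt 3 * Real.cos θ * Real.sin θ + 2 * Real.sin θ ^ 2))
        MeasureTheory.volume (π/6) (π/2) := by
      apply Continuous.intervalIntegrable; fun_prop
    rw [intervalIntegral.integral_eq_sub_of_hasDerivAt hderiv hcont]
    rw [Real.cos_pi_div_two, Real.sin_pi_div_two, Real.cos_pi_div_six, Real.sin_pi_div_six]
    linear_combination ((3/16) * Real.sqrt 3) * h3
  have hFg : (∫ θ in (0:ℝ)..(2 * π), gTriangle (Real.cos θ) (Real.sin θ))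
      = ∫ θ in (0:ℝ)..(2 * π), Ftri θ := rfl
  rw [hFg, step1, step2, hends, hcong, hcalc]
  field_simp
  ring
end

section
/- For all real numbers a, b, c with a² + b² + c² = 1, max{ (4/3)a², (4/3)b², (4/3)c², (4/3)(1 + 2ab − c²), (4/3)(1 + 2ac − b²), (4/3)(1 − 2ab − c²), (4/3)(1 − 2ac − b²), (4/3)(b + c)², (4/3)(b − c)², (4/3)(1 + 2ab + 2ac + 2bc), (4/3)(1 + 2ab − 2ac − 2bc), (4/3)(1 − 2ab − 2ac + 2bc), (4/3)(1 − 2ab + 2ac − 2bc) } = max{ (4/3)(1 + 2ab + 2ac + 2bc), (4/3)(1 + 2ab − 2ac − 2bc), (4/3)(1 − 2ab − 2ac + 2bc), (4/3)(1 − 2ab + 2ac − 2bc) }. -/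
/-- For `(a,b,c)` on the unit sphere, the maximum of the thirteen squared distances arising
in the width computation for the cube reduces to a maximum over four terms. -/
theorem cube_width_max_simplification (a b c : ℝ) (habc : a ^ 2 + b ^ 2 + c ^ 2 = 1) :
    max (max (max (max ((4/3) * a ^ 2) ((4/3) * b ^ 2))
          (max ((4/3) * c ^ 2) ((4/3) * (1 + 2 * a * b - c ^ 2))))
        (max (max ((4/3) * (1 + 2 * a * c - b ^ 2)) ((4/3) * (1 - 2 * a * b - c ^ 2)))
          (max ((4/3) * (1 - 2 * a * c - b ^ 2)) ((4/3) * (b + c) ^ 2))))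
      (max (max ((4/3) * (b - c) ^ 2)
          (max ((4/3) * (1 + 2 * a * b + 2 * a * c + 2 * b * c))
            ((4/3) * (1 + 2 * a * b - 2 * a * c - 2 * b * c))))
        (max ((4/3) * (1 - 2 * a * b - 2 * a * c + 2 * b * c))
          ((4/3) * (1 - 2 * a * b + 2 * a * c - 2 * b * c))))
      = max (max ((4/3) * (1 + 2 * a * b + 2 * a * c + 2 * b * c))
            ((4/3) * (1 + 2 * a * b - 2 * a * c - 2 * b * c)))
          (max ((4/3) * (1 - 2 * a * b - 2 * a * c + 2 * b * c))
            ((4/3) * (1 - 2 * a * b + 2 * a * c - 2 * b * c))) := by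
  set M := max (max ((4/3 : ℝ) * (1 + 2 * a * b + 2 * a * c + 2 * b * c))
            ((4/3) * (1 + 2 * a * b - 2 * a * c - 2 * b * c)))
          (max ((4/3) * (1 - 2 * a * b - 2 * a * c + 2 * b * c))
            ((4/3) * (1 - 2 * a * b + 2 * a * c - 2 * b * c))) with hM
  have h1 : (4/3 : ℝ) * (1 + 2 * a * b + 2 * a * c + 2 * b * c) ≤ M :=
    (le_max_left _ _).trans (le_max_left _ _)
  have h2 : (4/3 : ℝ) * (1 + 2 * a * b - 2 * a * c - 2 * b * c) ≤ M :=
    (le_max_right _ _).trans (le_max_left _ _)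
  have h3 : (4/3 : ℝ) * (1 - 2 * a * b - 2 * a * c + 2 * b * c) ≤ M :=
    (le_max_left _ _).trans (le_max_right _ _)
  have h4 : (4/3 : ℝ) * (1 - 2 * a * b + 2 * a * c - 2 * b * c) ≤ M :=
    (le_max_right _ _).trans (le_max_right _ _)
  apply le_antisymm
  · refine max_le (max_le (max_le (max_le ?_ ?_) (max_le ?_ ?_))
      (max_le (max_le ?_ ?_) (max_le ?_ ?_)))
      (max_le (max_le ?_ (max_le h1 h2)) (max_le h3 h4))
    · linarith [h1, h2, h3, h4, sq_nonneg b, sq_nonneg c]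
    · linarith [h1, h2, h3, h4, sq_nonneg a, sq_nonneg c]
    · linarith [h1, h2, h3, h4, sq_nonneg a, sq_nonneg b]
    · linarith [h1, h2, sq_nonneg c]
    · linarith [h1, h4, sq_nonneg b]
    · linarith [h3, h4, sq_nonneg c]
    · linarith [h2, h3, sq_nonneg b]
    · nlinarith [h1, h3, sq_nonneg a]
    · nlinarith [h2, h4, sq_nonneg a]
  · exact le_trans (max_le ((le_max_right _ _).trans (le_max_left _ _)) (le_max_right _ _))
      (le_max_right _ _)
end
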